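/- For every d ≥ 2 there exists M_d > 0 such that the largest Schmidt coefficient μ₁ of any unit vector in Parthasarathy's completely entangled subspace S ⊂ ℂᵈ ⊗ ℂᵈ satisfies μ₁² ≤ 1 − M_d; one may take M_d = inf over unit simple tensors x ⊗ y of ‖P_L(x⊗y)‖², and this infimum is attained and strictly positive. -/

import Mathlib

noncomputable section

/-- The simple tensor `x ⊗ y` of two vectors, realized in `EuclideanSpace ℂ (ι × κ)`. -/
def tens {ι κ : Type*} [Fintype ι] [Fintype κ] (x : EuclideanSpace ℂ ι) (y : EuclideanSpace ℂ κ) :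
    EuclideanSpace ℂ (ι × κ) :=
  WithLp.toLp 2 (fun p => x p.1 * y p.2)

/-- `h = ∑ i, μ i • (u i ⊗ v i)` is a Schmidt decomposition of `h`. -/
def IsSchmidt {ι κ : Type*} [Fintype ι] [Fintype κ] (h : EuclideanSpace ℂ (ι × κ)) {r : ℕ}
    (μ : Fin r → ℝ) (u : Fin r → EuclideanSpace ℂ ι) (v : Fin r → EuclideanSpace ℂ κ) : Prop :=
  (∀ i, 0 ≤ μ i) ∧ Orthonormal ℂ u ∧ Orthonormal ℂ v ∧
    h = ∑ i, (μ i : ℂ) • tens (u i) (v i)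

/-- The vector `u_λ = (1, λ, λ², …, λ^{d-1}) = ∑_k λᵏ e_k ∈ ℂᵈ`. -/
def uVec (d : ℕ) (lam : ℂ) : EuclideanSpace ℂ (Fin d) :=
  WithLp.toLp 2 (fun k => lam ^ (k : ℕ))

section Helpers
open Polynomial

lemma inner_tens {ι κ : Type*} [Fintype ι] [Fintype κ] (a x : EuclideanSpace ℂ ι)
    (b y : EuclideanSpace ℂ κ) :
    inner ℂ (tens a b) (tens x y) = (inner ℂ a x * inner ℂ b y : ℂ) := by
  simp only [PiLp.inner_apply, RCLike.inner_apply, tens, PiLp.toLp_apply, Finset.sum_mul_sum, map_mul]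
  rw [← Finset.sum_product', ← Finset.univ_product_univ]
  exact Finset.sum_congr rfl fun p _ => by ring

lemma tens_smul_left {ι κ : Type*} [Fintype ι] [Fintype κ] (c : ℂ) (x : EuclideanSpace ℂ ι)
    (y : EuclideanSpace ℂ κ) : tens (c • x) y = c • tens x y := by
  ext p
  simp only [tens, PiLp.smul_apply, PiLp.toLp_apply]
  simp [mul_assoc]

lemma norm_tens {ι κ : Type*} [Fintype ι] [Fintype κ] (x : EuclideanSpace ℂ ι)
    (y : EuclideanSpace ℂ κ) : ‖tens x y‖ = ‖x‖ * ‖y‖ := by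
  have h := inner_tens x x y y
  rw [inner_self_eq_norm_sq_to_K, inner_self_eq_norm_sq_to_K, inner_self_eq_norm_sq_to_K] at h
  have h3 : (‖tens x y‖ : ℝ) ^ 2 = (‖x‖ * ‖y‖) ^ 2 := by
    have := congrArg Complex.re h
    rw [mul_pow]
    simpa [← Complex.ofReal_pow, ← Complex.ofReal_mul] using this
  nlinarith [norm_nonneg (tens x y), mul_nonneg (norm_nonneg x) (norm_nonneg y)]

lemma continuous_tens {ι κ : Type*} [Fintype ι] [Fintype κ] :
    Continuous (fun p : EuclideanSpace ℂ ι × EuclideanSpace ℂ κ => tens p.1 p.2) := by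
  have h1 : Continuous (fun p : EuclideanSpace ℂ ι × EuclideanSpace ℂ κ =>
      (fun q : ι × κ => p.1 q.1 * p.2 q.2 : ι × κ → ℂ)) := by
    apply continuous_pi
    intro q
    have ha : Continuous (fun p : EuclideanSpace ℂ ι × EuclideanSpace ℂ κ => p.1 q.1) :=
      (continuous_apply q.1).comp ((PiLp.continuous_ofLp 2 _).comp continuous_fst)
    have hb : Continuous (fun p : EuclideanSpace ℂ ι × EuclideanSpace ℂ κ => p.2 q.2) :=
      (continuous_apply q.2).comp ((PiLp.continuous_ofLp 2 _).comp continuous_snd)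
    exact ha.mul hb
  exact (PiLp.continuous_toLp 2 (fun _ : ι × κ => ℂ)).comp h1

/-- The polynomial `∑ k, x k • X^k` attached to a vector `x ∈ ℂᵈ`. -/
def polyOf {d : ℕ} (x : EuclideanSpace ℂ (Fin d)) : ℂ[X] :=
  ∑ k : Fin d, C (x k) * X ^ (k : ℕ)

lemma polyOf_natDegree_le {d : ℕ} (hd : 1 ≤ d) (x : EuclideanSpace ℂ (Fin d)) :
    (polyOf x).natDegree ≤ d - 1 := by
  refine Polynomial.natDegree_sum_le_of_forall_le _ _ fun k _ => ?_
  exact (natDegree_C_mul_le _ _).trans (by simp [Nat.le_sub_one_iff_lt hd, k.isLt])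

lemma polyOf_eval {d : ℕ} (x : EuclideanSpace ℂ (Fin d)) (t : ℂ) :
    (polyOf x).eval t = ∑ k : Fin d, x k * t ^ (k : ℕ) := by
  simp [polyOf, eval_finset_sum]

lemma inner_uVec {d : ℕ} (lam : ℂ) (x : EuclideanSpace ℂ (Fin d)) :
    (inner ℂ (uVec d lam) x : ℂ) = (polyOf x).eval (starRingEnd ℂ lam) := by
  simp only [PiLp.inner_apply, RCLike.inner_apply, uVec, PiLp.toLp_apply, polyOf_eval, map_pow]

lemma polyOf_eq_zero_iff {d : ℕ} (x : EuclideanSpace ℂ (Fin d)) :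
    polyOf x = 0 ↔ x = 0 := by
  constructor
  · intro h
    ext j
    have := congrArg (fun p => Polynomial.coeff p (j : ℕ)) h
    simp only [polyOf, finset_sum_coeff, coeff_C_mul, coeff_X_pow, coeff_zero] at this
    rw [Finset.sum_eq_single j (fun k _ hk => by
        rw [if_neg (fun h => hk (Fin.ext h.symm)), mul_zero]) (by simp)] at this
    simpa using this
  · intro h; subst h; simp [polyOf]

/-- `S = Lᗮ` contains no (nonzero) simple tensors. -/
lemma no_simple (d : ℕ) (hd : 2 ≤ d) (G : Finset ℂ) (hG : G.card = 2 * d - 1)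
    (L : Submodule ℂ (EuclideanSpace ℂ (Fin d × Fin d)))
    (hL : L = Submodule.span ℂ {w | ∃ lam ∈ G, w = tens (uVec d lam) (uVec d lam)})
    (x y : EuclideanSpace ℂ (Fin d)) (hmem : tens x y ∈ Lᗮ) (hnorm : ‖tens x y‖ = 1) :
    False := by
  have key : ∀ lam ∈ G, (polyOf x * polyOf y).eval (starRingEnd ℂ lam) = 0 := by
    intro lam hlam
    have hw : tens (uVec d lam) (uVec d lam) ∈ L := by
      rw [hL]; exact Submodule.subset_span ⟨lam, hlam, rfl⟩
    have h0 : (inner ℂ (tens (uVec d lam) (uVec d lam)) (tens x y) : ℂ) = 0 :=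
      (Submodule.mem_orthogonal L (tens x y)).1 hmem _ hw
    rw [inner_tens, inner_uVec, inner_uVec] at h0
    simpa [eval_mul] using h0
  have key' : ∀ t ∈ G.image (starRingEnd ℂ), (polyOf x * polyOf y).eval t = 0 := by
    intro t ht
    obtain ⟨lam, hlam, rfl⟩ := Finset.mem_image.1 ht
    exact key lam hlam
  have hcard : (G.image (starRingEnd ℂ)).card = 2 * d - 1 := by
    rw [Finset.card_image_of_injective _ (starRingEnd ℂ).injective, hG]
  have hdeg : (polyOf x * polyOf y).natDegree < (G.image (starRingEnd ℂ)).card := by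
    rw [hcard]
    calc (polyOf x * polyOf y).natDegree ≤ (polyOf x).natDegree + (polyOf y).natDegree :=
          natDegree_mul_le
      _ ≤ (d - 1) + (d - 1) := add_le_add (polyOf_natDegree_le (by omega) x)
          (polyOf_natDegree_le (by omega) y)
      _ < 2 * d - 1 := by omega
  have hz := Polynomial.eq_zero_of_natDegree_lt_card_of_eval_eq_zero' _ _ key' hdeg
  rcases mul_eq_zero.1 hz with h | h
  · have : x = 0 := (polyOf_eq_zero_iff x).1 h
    subst this
    have : tens (0 : EuclideanSpace ℂ (Fin d)) y = 0 := by ext p; simp [tens]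
    rw [this] at hnorm; simp at hnorm
  · have : y = 0 := (polyOf_eq_zero_iff y).1 h
    subst this
    have : tens x (0 : EuclideanSpace ℂ (Fin d)) = 0 := by ext p; simp [tens]
    rw [this] at hnorm; simp at hnorm

end Helpers

/-- for every `d ≥ 2` there is `M_d > 0`, namely the (attained) infimum over
unit simple tensors `x ⊗ y` of `‖P_L(x ⊗ y)‖²`, such that the largest Schmidt coefficient `μ₁`
of every unit vector of Parthasarathy's completely entangled subspace `S = L^⊥` satisfies
`μ₁² ≤ 1 - M_d`. -/
theorem parthasarathy_schmidt_bound (d : ℕ) (hd : 2 ≤ d) (G : Finset ℂ)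
    (hG : G.card = 2 * d - 1) (L : Submodule ℂ (EuclideanSpace ℂ (Fin d × Fin d)))
    (hL : L = Submodule.span ℂ {w | ∃ lam ∈ G, w = tens (uVec d lam) (uVec d lam)}) :
    ∃ M : ℝ, 0 < M ∧
      IsGLB {t : ℝ | ∃ x y : EuclideanSpace ℂ (Fin d),
        ‖tens x y‖ = 1 ∧ t = ‖Submodule.orthogonalProjectionOnto L (tens x y)‖ ^ 2} M ∧
      (∃ x y : EuclideanSpace ℂ (Fin d),
        ‖tens x y‖ = 1 ∧ ‖Submodule.orthogonalProjectionOnto L (tens x y)‖ ^ 2 = M) ∧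
      (∀ ξ ∈ Lᗮ, ‖ξ‖ = 1 → ∀ (r : ℕ) (μ : Fin r → ℝ)
        (u v : Fin r → EuclideanSpace ℂ (Fin d)) (μ₁ : ℝ),
        IsSchmidt ξ μ u v → IsGreatest (Set.range μ) μ₁ → μ₁ ^ 2 ≤ 1 - M) := by
  classical
  set f : EuclideanSpace ℂ (Fin d × Fin d) → ℝ :=
    fun z => ‖(Submodule.orthogonalProjectionOnto L z : EuclideanSpace ℂ (Fin d × Fin d))‖ ^ 2 with hf
  set T : Set ℝ := {t : ℝ | ∃ x y : EuclideanSpace ℂ (Fin d), ‖tens x y‖ = 1 ∧ t = f (tens x y)} with hT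
  -- the compact set of pairs of unit vectors
  set K : Set ((EuclideanSpace ℂ (Fin d)) × (EuclideanSpace ℂ (Fin d))) := Metric.sphere 0 1 ×ˢ Metric.sphere 0 1 with hK
  have hKc : IsCompact K := (isCompact_sphere 0 1).prod (isCompact_sphere 0 1)
  have hKne : K.Nonempty := by
    have hone : ‖(EuclideanSpace.single (⟨0, by omega⟩ : Fin d) (1 : ℂ))‖ = 1 := by
      rw [EuclideanSpace.norm_single]; norm_num
    exact ⟨(EuclideanSpace.single ⟨0, by omega⟩ 1, EuclideanSpace.single ⟨0, by omega⟩ 1),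
      by simp [hone], by simp [hone]⟩
  have hfc : Continuous (fun p : (EuclideanSpace ℂ (Fin d)) × (EuclideanSpace ℂ (Fin d)) => f (tens p.1 p.2)) := by
    have : Continuous f := by
      have := (Submodule.orthogonalProjectionOnto L).continuous
      exact (continuous_norm.comp (continuous_subtype_val.comp this)).pow 2
    exact this.comp continuous_tens
  obtain ⟨p₀, hp₀K, hp₀min⟩ := hKc.exists_isMinOn hKne hfc.continuousOn
  set M : ℝ := f (tens p₀.1 p₀.2) with hM
  have hp₀norm : ‖tens p₀.1 p₀.2‖ = 1 := by
    rw [norm_tens]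
    have h1 : ‖p₀.1‖ = 1 := by simpa using hp₀K.1
    have h2 : ‖p₀.2‖ = 1 := by simpa using hp₀K.2
    rw [h1, h2, mul_one]
  have hMT : M ∈ T := ⟨p₀.1, p₀.2, hp₀norm, rfl⟩
  -- M is a lower bound for T
  have hMlb : ∀ t ∈ T, M ≤ t := by
    rintro t ⟨x, y, hxy, rfl⟩
    have hx : x ≠ 0 := by
      rintro rfl
      rw [norm_tens] at hxy; simp at hxy
    set x' : EuclideanSpace ℂ (Fin d) := (‖x‖ : ℂ)⁻¹ • x with hx'
    set y' : EuclideanSpace ℂ (Fin d) := (‖x‖ : ℂ) • y with hy'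
    have hnx : ‖x‖ ≠ 0 := norm_ne_zero_iff.2 hx
    have htens : tens x' y' = tens x y := by
      ext p
      simp only [tens, PiLp.toLp_apply, hx', hy']
      have : (‖x‖ : ℂ) ≠ 0 := by exact_mod_cast hnx
      simp only [PiLp.smul_apply, smul_eq_mul]
      field_simp
    have hx'1 : ‖x'‖ = 1 := by
      rw [hx', norm_smul]
      simp [hnx]
    have hy'1 : ‖y'‖ = 1 := by
      have : ‖x'‖ * ‖y'‖ = 1 := by rw [← norm_tens, htens, hxy]
      rwa [hx'1, one_mul] at this
    have hmem : (x', y') ∈ K := by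
      constructor <;> simp [hx'1, hy'1]
    have := hp₀min hmem
    simpa [htens] using this
  refine ⟨M, ?_, ?_, ⟨p₀.1, p₀.2, hp₀norm, rfl⟩, ?_⟩
  · -- positivity
    rcases lt_or_eq_of_le (by positivity : (0:ℝ) ≤ M) with h | h
    · exact h
    exfalso
    have hzero : ‖(Submodule.orthogonalProjectionOnto L (tens p₀.1 p₀.2) : EuclideanSpace ℂ (Fin d × Fin d))‖ ^ 2 = 0 := by
      have h' : f (tens p₀.1 p₀.2) = 0 := by rw [← hM, ← h]
      simpa [hf] using h'
    have hproj : (Submodule.orthogonalProjectionOnto L (tens p₀.1 p₀.2) : EuclideanSpace ℂ (Fin d × Fin d)) = 0 :=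
      norm_eq_zero.1 ((pow_eq_zero_iff (two_ne_zero)).1 hzero)
    have hmem : tens p₀.1 p₀.2 ∈ Lᗮ := by
      have := Submodule.orthogonalProjectionOnto_eq_zero_iff (K := L) (v := tens p₀.1 p₀.2)
      apply this.1
      exact Subtype.ext hproj
    exact no_simple d hd G hG L hL p₀.1 p₀.2 hmem hp₀norm
  · -- IsGLB
    exact ⟨hMlb, fun b hb => hb hMT⟩
  · -- Schmidt bound
    rintro ξ hξ hξ1 r μ u v μ₁ ⟨hpos, hu, hv, hsum⟩ hgr
    obtain ⟨i₀, hi₀⟩ := hgr.1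
    set z := tens (u i₀) (v i₀) with hz
    have hznorm : ‖z‖ = 1 := by
      rw [hz, norm_tens, hu.1 i₀, hv.1 i₀, mul_one]
    -- inner product ⟪z, ξ⟫ = μ i₀
    have hinner : (inner ℂ z ξ : ℂ) = (μ i₀ : ℂ) := by
      rw [hsum, inner_sum]
      have : ∀ j, (inner ℂ z ((μ j : ℂ) • tens (u j) (v j)) : ℂ)
          = if i₀ = j then (μ j : ℂ) else 0 := by
        intro j
        rw [inner_smul_right, hz, inner_tens]
        rcases eq_or_ne i₀ j with rfl | hne
        · rw [if_pos rfl]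
          have h1 : (inner ℂ (u i₀) (u i₀) : ℂ) = 1 := by
            rw [inner_self_eq_norm_sq_to_K, hu.1 i₀]; norm_num
          have h2 : (inner ℂ (v i₀) (v i₀) : ℂ) = 1 := by
            rw [inner_self_eq_norm_sq_to_K, hv.1 i₀]; norm_num
          rw [h1, h2]; ring
        · rw [if_neg hne, hu.2 hne]
          ring
      rw [Finset.sum_congr rfl fun j _ => this j]
      simp
    -- the key estimate
    have horth : (inner ℂ ((Submodule.orthogonalProjectionOnto L z : EuclideanSpace ℂ (Fin d × Fin d))) ξ : ℂ) = 0 :=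
      (Submodule.mem_orthogonal L ξ).1 hξ _ (Submodule.orthogonalProjectionOnto L z).2
    have hsub : (inner ℂ (z - (Submodule.orthogonalProjectionOnto L z : EuclideanSpace ℂ (Fin d × Fin d))) ξ : ℂ)
        = (μ i₀ : ℂ) := by
      rw [inner_sub_left, horth, sub_zero, hinner]
    have hcs : |μ i₀| ≤ ‖z - (Submodule.orthogonalProjectionOnto L z : EuclideanSpace ℂ (Fin d × Fin d))‖ := by
      have := norm_inner_le_norm (𝕜 := ℂ)
        (z - (Submodule.orthogonalProjectionOnto L z : EuclideanSpace ℂ (Fin d × Fin d))) ξ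
      rw [hsub, hξ1, mul_one] at this
      simpa using this
    -- Pythagoras
    have hpyth : ‖z - (Submodule.orthogonalProjectionOnto L z : EuclideanSpace ℂ (Fin d × Fin d))‖ ^ 2
        = 1 - f z := by
      have h1 := Submodule.norm_sq_eq_add_norm_sq_projection z L
      have h2 : (z - (Submodule.orthogonalProjectionOnto L z : EuclideanSpace ℂ (Fin d × Fin d)))
          = (Submodule.orthogonalProjectionOnto Lᗮ z : EuclideanSpace ℂ (Fin d × Fin d)) := by
        have := Submodule.starProjection_add_starProjection_orthogonal (K := L) z
        simp only [Submodule.starProjection_apply] at this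
        linear_combination (norm := abel) - this
      rw [h2]
      rw [hznorm] at h1
      simp only [hf, Submodule.coe_norm] at h1 ⊢
      linarith
    have hMz : M ≤ f z := hMlb _ ⟨u i₀, v i₀, hznorm, rfl⟩
    have hμ₁ : μ₁ = μ i₀ := hi₀.symm
    have hμnn : 0 ≤ μ i₀ := hpos i₀
    have : (μ i₀) ^ 2 ≤ 1 - f z := by
      have := hcs
      rw [abs_of_nonneg hμnn] at this
      nlinarith [norm_nonneg (z - (Submodule.orthogonalProjectionOnto L z : EuclideanSpace ℂ (Fin d × Fin d)))]
    rw [hμ₁]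
    linarith
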